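/- Fix 0 < β < 1. The function f₁ : (0,∞) → ℝ defined by f₁(x) = x·log(x/((1−β)x+β)) is convex on (0,∞) and satisfies f₁(1) = 0. -/

import Mathlib

open Real

/-- The function `f₁(x) = x·log(x/((1−β)x+β))` is convex on `(0,∞)` and satisfies
`f₁(1) = 0`. -/
theorem f1_convexOn_and_eq_zero_at_one (β : ℝ) (hβ0 : 0 < β) (hβ1 : β < 1)
    (f₁ : ℝ → ℝ) (hf₁ : ∀ x, f₁ x = x * Real.log (x / ((1 - β) * x + β))) :
    ConvexOn ℝ (Set.Ioi (0 : ℝ)) f₁ ∧ f₁ 1 = 0 := by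
  have ha : 0 < 1 - β := by linarith
  set a : ℝ := 1 - β with ha_def
  set g : ℝ → ℝ := fun x => x * Real.log x - x * Real.log (a * x + β) with hg
  set g' : ℝ → ℝ := fun x => Real.log x + 1 - Real.log (a * x + β) - a * x / (a * x + β)
    with hg'
  have hdpos : ∀ x : ℝ, 0 < x → 0 < a * x + β := fun x hx => by positivity
  have hderiv : ∀ x ∈ Set.Ioi (0:ℝ), HasDerivAt g (g' x) x := by
    intro x hx
    have hx : (0:ℝ) < x := hx
    have hd := hdpos x hx
    have hlin : HasDerivAt (fun x : ℝ => a * x + β) a x := by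
      simpa using ((hasDerivAt_id x).const_mul a).add_const β
    have h1 : HasDerivAt (fun x : ℝ => x * Real.log x) (Real.log x + 1) x := by
      have := (hasDerivAt_id x).mul (Real.hasDerivAt_log hx.ne')
      refine this.congr_deriv ?_
      field_simp
      simp only [id_eq]
      ring
    have h2 : HasDerivAt (fun x : ℝ => x * Real.log (a * x + β))
        (Real.log (a * x + β) + x * (a / (a * x + β))) x := by
      have hlog : HasDerivAt (fun x : ℝ => Real.log (a * x + β)) (a / (a * x + β)) x := by
        have := (Real.hasDerivAt_log hd.ne').comp x hlin
        exact hlin.log hd.ne'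
      have := (hasDerivAt_id x).mul hlog
      refine this.congr_deriv ?_
      simp only [id_eq, one_mul]
    have := h1.sub h2
    refine this.congr_deriv ?_
    simp only [hg']
    field_simp
    ring
  have hderiv2 : ∀ x ∈ Set.Ioi (0:ℝ),
      HasDerivAt g' (x⁻¹ - a / (a * x + β) - a * β / (a * x + β) ^ 2) x := by
    intro x hx
    have hx : (0:ℝ) < x := hx
    have hd := hdpos x hx
    have hlin : HasDerivAt (fun x : ℝ => a * x + β) a x := by
      simpa using ((hasDerivAt_id x).const_mul a).add_const β
    have hlog : HasDerivAt (fun x : ℝ => Real.log (a * x + β)) (a / (a * x + β)) x := by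
      have := (Real.hasDerivAt_log hd.ne').comp x hlin
      exact hlin.log hd.ne'
    have hnum : HasDerivAt (fun x : ℝ => a * x) a x := by
      simpa using (hasDerivAt_id x).const_mul a
    have hdiv : HasDerivAt (fun x : ℝ => a * x / (a * x + β))
        ((a * (a * x + β) - a * x * a) / (a * x + β) ^ 2) x := hnum.div hlin hd.ne'
    have h1 : HasDerivAt (fun x : ℝ => Real.log x + 1) x⁻¹ x :=
      (Real.hasDerivAt_log hx.ne').add_const 1
    have := (h1.sub hlog).sub hdiv
    refine this.congr_deriv ?_
    have h2 : (a * (a * x + β) - a * x * a) = a * β := by ring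
    rw [h2]
  have hopen : interior (Set.Ioi (0:ℝ)) = Set.Ioi 0 := isOpen_Ioi.interior_eq
  have hderiv_eq : ∀ x ∈ Set.Ioi (0:ℝ), deriv g x = g' x := fun x hx =>
    (hderiv x hx).deriv
  have hEvEq : ∀ x ∈ Set.Ioi (0:ℝ), deriv g =ᶠ[nhds x] g' := by
    intro x hx
    filter_upwards [isOpen_Ioi.mem_nhds hx] with y hy using hderiv_eq y hy
  have hconv_g : ConvexOn ℝ (Set.Ioi (0:ℝ)) g := by
    apply convexOn_of_deriv2_nonneg (convex_Ioi 0)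
    · exact fun x hx => ((hderiv x hx).differentiableAt).continuousAt.continuousWithinAt
    · rw [hopen]
      exact fun x hx => ((hderiv x hx).differentiableAt).differentiableWithinAt
    · rw [hopen]
      intro x hx
      have : DifferentiableAt ℝ g' x := (hderiv2 x hx).differentiableAt
      exact ((hEvEq x hx).differentiableAt_iff.mpr this).differentiableWithinAt
    · rw [hopen]
      intro x hx
      have hx' : (0:ℝ) < x := hx
      have hd := hdpos x hx'
      have : deriv (deriv g) x = x⁻¹ - a / (a * x + β) - a * β / (a * x + β) ^ 2 := by
        rw [(hEvEq x hx).deriv_eq]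
        exact (hderiv2 x hx).deriv
      simp only [Function.iterate_succ, Function.iterate_zero, Function.comp_apply, id_eq]
      rw [this]
      have key : x⁻¹ - a / (a * x + β) - a * β / (a * x + β) ^ 2
          = β ^ 2 / (x * (a * x + β) ^ 2) := by
        field_simp
        ring
      rw [key]
      positivity
  constructor
  · have heq : Set.EqOn f₁ g (Set.Ioi 0) := by
      intro x hx
      have hx' : (0:ℝ) < x := hx
      have hd := hdpos x hx'
      rw [hf₁, hg]
      simp only
      rw [Real.log_div hx'.ne' hd.ne']
      ring
    exact hconv_g.congr heq.symm
  · rw [hf₁]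
    have h1 : a * 1 + β = 1 := by rw [ha_def]; ring
    rw [h1]
    simp
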